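/- Any layer of controlled-Z rotations factorizes into a single GZZ gate and local Z rotations: GCR_Z(A) := ∏_{i<j} CR_Z(A_{ij})_{i,j} = e^{−(i/4)a} · GZZ(A/4) · ∏_{k=1}^n R_Z(b_k/2)_k, where a = Σ_{i<j} A_{ij}, b_k = Σ_j A_{kj}, and GZZ(A) := e^{(i/2) Z^T A Z}. -/

import Mathlib

lemma diag_noncommProd {ι I : Type*} [Fintype I] [DecidableEq I] (s : Finset ι)
    (d : ι → I → ℂ)
    (h : (s : Set ι).Pairwise (Function.onFun Commute fun i => Matrix.diagonal (d i))) :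
    s.noncommProd (fun i => Matrix.diagonal (d i)) h
      = Matrix.diagonal (fun x => ∏ i ∈ s, d i x) := by
  have hc : (↑s : Set ι).Pairwise (Function.onFun Commute d) := fun a _ b _ _ => Commute.all _ _
  have hmap := Finset.map_noncommProd s d hc (Matrix.diagonalRingHom I ℂ)
  rw [Finset.noncommProd_eq_prod] at hmap
  have hmap' : s.noncommProd (fun i => Matrix.diagonal (d i)) h
      = Matrix.diagonal (s.prod d) := hmap.symm
  rw [hmap']
  have : s.prod d = fun x => ∏ i ∈ s, d i x := funext fun x => Finset.prod_apply x s d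
  rw [this]

lemma sum_split {n : ℕ} (f : Fin n → Fin n → ℂ) (hsym : ∀ i j, f i j = f j i)
    (hdiag : ∀ i, f i i = 0) :
    ∑ i, ∑ j, f i j
      = 2 * ∑ p ∈ Finset.univ.filter (fun p : Fin n × Fin n => p.1 < p.2), f p.1 p.2 := by
  rw [← Finset.sum_product', Finset.univ_product_univ]
  rw [← Finset.sum_filter_add_sum_filter_not Finset.univ (fun p : Fin n × Fin n => p.1 < p.2)]
  have hsub : Finset.univ.filter (fun p : Fin n × Fin n => p.2 < p.1)
      ⊆ Finset.univ.filter (fun p : Fin n × Fin n => ¬ p.1 < p.2) := by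
    intro p hp
    simp only [Finset.mem_filter, Finset.mem_univ, true_and] at *
    exact lt_asymm hp
  have h0 : ∑ p ∈ Finset.univ.filter (fun p : Fin n × Fin n => ¬ p.1 < p.2), f p.1 p.2
      = ∑ p ∈ Finset.univ.filter (fun p : Fin n × Fin n => p.2 < p.1), f p.1 p.2 := by
    refine (Finset.sum_subset hsub ?_).symm
    intro p hp hnp
    simp only [Finset.mem_filter, Finset.mem_univ, true_and] at hp hnp
    have : p.1 = p.2 := le_antisymm (not_lt.mp hnp) (not_lt.mp hp)
    rw [← this]; exact hdiag p.1
  have hswap : ∑ p ∈ Finset.univ.filter (fun p : Fin n × Fin n => p.2 < p.1), f p.1 p.2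
      = ∑ p ∈ Finset.univ.filter (fun p : Fin n × Fin n => p.1 < p.2), f p.1 p.2 := by
    refine Finset.sum_nbij' Prod.swap Prod.swap ?_ ?_ ?_ ?_ ?_
    · intro p hp; simp only [Finset.mem_filter, Finset.mem_univ, true_and] at *; exact hp
    · intro p hp; simp only [Finset.mem_filter, Finset.mem_univ, true_and] at *; exact hp
    · intro p _; simp
    · intro p _; simp
    · intro p _; exact hsym p.1 p.2
  rw [h0, hswap]; ring



open Matrix

/-- The local Z-rotation `R_Z(α)_k |x⟩ = e^{iα x_k} |x⟩`. -/
noncomputable def RZ (n : ℕ) (α : ℝ) (k : Fin n) :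
    Matrix (Fin n → Bool) (Fin n → Bool) ℂ :=
  Matrix.diagonal fun x => Complex.exp (Complex.I * α * (if x k then 1 else 0))

/-- The controlled Z-rotation `CR_Z(α)_{i,j} |x⟩ = e^{iα x_i x_j} |x⟩`. -/
noncomputable def CRZ (n : ℕ) (α : ℝ) (i j : Fin n) :
    Matrix (Fin n → Bool) (Fin n → Bool) ℂ :=
  Matrix.diagonal fun x =>
    Complex.exp (Complex.I * α * (if x i && x j then 1 else 0))

/-- The multi-qubit gate `GZZ(A) = e^{(i/2) Zᵀ A Z}`, i.e.
`GZZ(A)|x⟩ = e^{(i/2) Σ_{i,j} A_{ij} (-1)^{x_i} (-1)^{x_j}} |x⟩`. -/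
noncomputable def GZZ (n : ℕ) (A : Matrix (Fin n) (Fin n) ℝ) :
    Matrix (Fin n → Bool) (Fin n → Bool) ℂ :=
  Matrix.diagonal fun x =>
    Complex.exp ((Complex.I / 2) * ∑ i : Fin n, ∑ j : Fin n,
      (A i j : ℂ) * (if x i then (-1 : ℂ) else 1) * (if x j then (-1 : ℂ) else 1))

lemma diagonal_commute {I : Type*} [Fintype I] [DecidableEq I] (d e : I → ℂ) :
    Commute (Matrix.diagonal d) (Matrix.diagonal e) := by
  have h : (fun i => d i * e i) = fun i => e i * d i := funext fun i => mul_comm _ _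
  unfold Commute SemiconjBy
  rw [Matrix.diagonal_mul_diagonal, Matrix.diagonal_mul_diagonal, h]

lemma crz_commute (n : ℕ) (α β : ℝ) (i j k l : Fin n) :
    Commute (CRZ n α i j) (CRZ n β k l) := diagonal_commute _ _

lemma rz_commute (n : ℕ) (α β : ℝ) (k l : Fin n) :
    Commute (RZ n α k) (RZ n β l) := diagonal_commute _ _

/-- Any layer of controlled-Z rotations factorizes into a single `GZZ`
gate and local Z rotations:
`∏_{i<j} CR_Z(A_{ij})_{i,j} = e^{−(i/4)a} · GZZ(A/4) · ∏_k R_Z(b_k/2)_k`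
with `a = Σ_{i<j} A_{ij}` and `b_k = Σ_j A_{kj}`. -/
theorem gcrz_factorization (n : ℕ) (A : Matrix (Fin n) (Fin n) ℝ)
    (hsym : A.IsSymm) (hdiag : ∀ i, A i i = 0) :
    (Finset.univ.filter fun p : Fin n × Fin n => p.1 < p.2).noncommProd
        (fun p => CRZ n (A p.1 p.2) p.1 p.2)
        (fun a _ b _ _ => crz_commute n _ _ _ _ _ _) =
      Complex.exp (-(Complex.I / 4) *
          (∑ p ∈ Finset.univ.filter fun p : Fin n × Fin n => p.1 < p.2,
            (A p.1 p.2 : ℂ))) •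
        (GZZ n ((1 / 4 : ℝ) • A) *
          Finset.univ.noncommProd
            (fun k : Fin n => RZ n ((∑ j : Fin n, A k j) / 2) k)
            (fun a _ b _ _ => rz_commute n _ _ _ _)) := by
  have hA : ∀ i j, A i j = A j i := fun i j => (Matrix.IsSymm.apply hsym j i)
  unfold CRZ RZ GZZ
  erw [diag_noncommProd, diag_noncommProd]
  rw [Matrix.diagonal_mul_diagonal, ← Matrix.diagonal_smul]
  refine congrArg Matrix.diagonal (funext fun x => ?_)
  simp only [Pi.smul_apply, smul_eq_mul, Matrix.smul_apply, Complex.ofReal_mul,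
    Complex.ofReal_div, Complex.ofReal_ofNat, Complex.ofReal_one, smul_eq_mul]
  rw [← Complex.exp_sum, ← Complex.exp_sum, ← Complex.exp_add, ← Complex.exp_add]
  congr 1
  set F := Finset.filter (fun p : Fin n × Fin n => p.1 < p.2) Finset.univ with hF
  set χ : Fin n → ℂ := fun i => if x i then 1 else 0 with hχ
  have hind : ∀ i j : Fin n, (if x i && x j then (1:ℂ) else 0) = χ i * χ j := by
    intro i j
    by_cases hi : x i <;> by_cases hj : x j <;> simp [hχ, hi, hj]
  have heps : ∀ i : Fin n, (if x i then (-1:ℂ) else 1) = 1 - 2 * χ i := by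
    intro i
    by_cases hi : x i <;> simp [hχ, hi] <;> ring
  simp only [hind, heps]
  set a := ∑ p ∈ F, (A p.1 p.2 : ℂ) with ha
  set S := ∑ p ∈ F, (A p.1 p.2 : ℂ) * χ p.1 * χ p.2 with hS
  set B := ∑ k : Fin n, (∑ j : Fin n, (A k j : ℂ)) * χ k with hB
  have hsum1 : ∑ i : Fin n, ∑ j : Fin n, (A i j : ℂ) = 2 * a := by
    rw [ha]
    refine sum_split _ (fun i j => ?_) (fun i => ?_)
    · exact_mod_cast hA i j
    · exact_mod_cast hdiag i
  have hsum2 : ∑ i : Fin n, ∑ j : Fin n, (A i j : ℂ) * χ i * χ j = 2 * S := by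
    rw [hS]
    refine sum_split _ (fun i j => ?_) (fun i => ?_)
    · rw [hA i j]; ring
    · have : (A i i : ℂ) = 0 := by exact_mod_cast hdiag i
      rw [this]; ring
  have hm1 : ∑ i : Fin n, ∑ j : Fin n, (A i j : ℂ) * χ i = B := by
    rw [hB]
    exact Finset.sum_congr rfl fun i _ => (Finset.sum_mul _ _ _).symm
  have hm2 : ∑ i : Fin n, ∑ j : Fin n, (A i j : ℂ) * χ j = B := by
    rw [Finset.sum_comm, hB]
    refine Finset.sum_congr rfl fun j _ => ?_
    rw [← Finset.sum_mul]
    congr 1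
    refine Finset.sum_congr rfl fun i _ => ?_
    exact_mod_cast hA i j
  have step : ∀ i j : Fin n, (1/4 * (A i j:ℂ) * (1 - 2*χ i)) * (1 - 2*χ j)
      = 1/4 * ((A i j:ℂ)) - 1/2 * ((A i j:ℂ) * χ i) - 1/2 * ((A i j:ℂ) * χ j)
        + ((A i j:ℂ) * χ i * χ j) := fun i j => by ring
  have hD : ∑ i : Fin n, ∑ j : Fin n, (1/4 * (A i j:ℂ) * (1 - 2*χ i)) * (1 - 2*χ j)
      = a/2 - B + 2*S := by
    simp only [step, Finset.sum_add_distrib, Finset.sum_sub_distrib, ← Finset.mul_sum]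
    rw [hsum1, hsum2, hm1, hm2]; ring
  have hLHS : ∑ p ∈ F, Complex.I * (A p.1 p.2:ℂ) * (χ p.1 * χ p.2) = Complex.I * S := by
    rw [hS, Finset.mul_sum]
    exact Finset.sum_congr rfl fun p _ => by ring
  have hRZ : ∑ k : Fin n, Complex.I * ((↑(∑ j : Fin n, A k j))/2) * χ k
      = Complex.I/2 * B := by
    rw [hB, Finset.mul_sum]
    refine Finset.sum_congr rfl fun k _ => ?_
    push_cast
    ring
  rw [hLHS, hD, hRZ]
  ring
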